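/- Let 1 < p_1,…,p_m < ∞ and f ∈ ℝ^{d_1×…×d_m} a nonnegative weakly irreducible tensor. Suppose there exists i ∈ [m] such that (m−1)p_i' ≤ p_k for every k ∈ [m]\{i}. Then f has a singular vector x* ∈ S^d_{++} (all entries strictly positive) with Q(x*) = ‖f‖_{p_1,…,p_m}. -/

import Mathlib

/-!
Common setup: tensors `f : (∀ i, Fin (d i)) → ℝ`, the induced multilinear form,
partial gradients, `ψ_q`, `ℓ^p` norms, Hölder conjugates, singular vectors,
(weak) irreducibility, the maps `σ_i`, `s_{i,k}`, `T_α`, `G`, the quantities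
`Q`, `‖f‖_{p_1,…,p_m}`, `Q_i`, `γ_i^±` and the Hilbert-type metric `μ`.
Points of `ℝ^{d-d_i}` are encoded as full tuples (the maps involved do not
depend on the `i`-th component), with conditions imposed only for `k ≠ i`.
-/

open Finset Filter

noncomputable section

namespace TensorPF

variable {m : ℕ} {d : Fin m → ℕ}

/-- The multilinear form induced by the tensor `f`. -/
def form (f : (∀ i, Fin (d i)) → ℝ) (x : ∀ i, Fin (d i) → ℝ) : ℝ :=
  ∑ j : ∀ i, Fin (d i), f j * ∏ i, x i (j i)

/-- The gradient of the multilinear form in its `i`-th argument. -/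
def grad (f : (∀ i, Fin (d i)) → ℝ) (i : Fin m) (x : ∀ i, Fin (d i) → ℝ) :
    Fin (d i) → ℝ :=
  fun ji => form f (Function.update x i (fun l => if l = ji then (1 : ℝ) else 0))

/-- `ψ_q(y)_j = |y_j|^(q-1) sign(y_j)`. -/
def psi (q : ℝ) {n : ℕ} (y : Fin n → ℝ) : Fin n → ℝ :=
  fun j => |y j| ^ (q - 1) * Real.sign (y j)

/-- The `ℓ^q`-norm on `Fin n → ℝ`. -/
def pnorm (q : ℝ) {n : ℕ} (y : Fin n → ℝ) : ℝ :=
  (∑ j, |y j| ^ q) ^ (1 / q)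

/-- The Hölder conjugate `q' = q/(q-1)`. -/
def conjExp (q : ℝ) : ℝ := q / (q - 1)

/-- `σ_i(x) = sign(f(x)) ψ_{p_i'}(∇_i f(x))`. -/
def sigma (f : (∀ i, Fin (d i)) → ℝ) (p : Fin m → ℝ) (i : Fin m)
    (x : ∀ i, Fin (d i) → ℝ) : Fin (d i) → ℝ :=
  fun ji => Real.sign (form f x) * psi (conjExp (p i)) (grad f i x) ji

/-- `Q(x) = |f(x)| / ∏ i ‖x_i‖_{p_i}`. -/
def Qform (f : (∀ i, Fin (d i)) → ℝ) (p : Fin m → ℝ)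
    (x : ∀ i, Fin (d i) → ℝ) : ℝ :=
  |form f x| / ∏ i, pnorm (p i) (x i)

/-- The projective tensor norm `‖f‖_{p_1,…,p_m} = sup Q`. -/
def tnorm (f : (∀ i, Fin (d i)) → ℝ) (p : Fin m → ℝ) : ℝ :=
  sSup {q : ℝ | ∃ x : ∀ i, Fin (d i) → ℝ, (∀ i, x i ≠ 0) ∧ q = Qform f p x}

/-- `x ∈ S^d` is a singular vector of `f` with singular value `lam` if
`σ_i(x) = lam^{p_i'-1} x_i` for all `i`. -/
def IsSingular (f : (∀ i, Fin (d i)) → ℝ) (p : Fin m → ℝ) (lam : ℝ)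
    (x : ∀ i, Fin (d i) → ℝ) : Prop :=
  (∀ i, pnorm (p i) (x i) = 1) ∧
  ∀ i ji, sigma f p i x ji = lam ^ (conjExp (p i) - 1) * x i ji

/-- `s_{i,k}(x) = ψ_{p_k'}(∇_k f(x_1,…,ψ_{p_i'}(∇_i f(x)),…,x_m))`. -/
def sik (f : (∀ i, Fin (d i)) → ℝ) (p : Fin m → ℝ) (i k : Fin m)
    (x : ∀ l, Fin (d l) → ℝ) : Fin (d k) → ℝ :=
  psi (conjExp (p k))
    (grad f k (Function.update x i (psi (conjExp (p i)) (grad f i x))))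

/-- The `m`-partite graph associated to a nonnegative tensor. -/
def wGraph (f : (∀ i, Fin (d i)) → ℝ) : SimpleGraph ((k : Fin m) × Fin (d k)) where
  Adj a b := a.1 ≠ b.1 ∧ ∃ j : ∀ l, Fin (d l), j a.1 = a.2 ∧ j b.1 = b.2 ∧ 0 < f j
  symm := ⟨by
    rintro a b ⟨h, j, h1, h2, h3⟩
    exact ⟨h.symm, j, h2, h1, h3⟩⟩
  loopless := ⟨by rintro a ⟨h, -⟩; exact h rfl⟩

/-- `f ≥ 0` is weakly irreducible if its graph is connected. -/
def WeaklyIrreducible (f : (∀ i, Fin (d i)) → ℝ) : Prop := (wGraph f).Connected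

/-- `f ≥ 0` is irreducible. -/
def Irreducible (f : (∀ i, Fin (d i)) → ℝ) : Prop :=
  ∀ J : Set ((k : Fin m) × Fin (d k)), J.Nonempty → J ≠ Set.univ →
    ∃ (k : Fin m) (j : ∀ l, Fin (d l)),
      (⟨k, j k⟩ : (l : Fin m) × Fin (d l)) ∈ J ∧
      (∀ l, l ≠ k → (⟨l, j l⟩ : (l : Fin m) × Fin (d l)) ∉ J) ∧ 0 < f j

/-- `T_α(z) = α_0 z + (α_1 σ_1(z),…,α_m σ_m(z))`. -/
def Tmap (f : (∀ i, Fin (d i)) → ℝ) (p : Fin m → ℝ) (a0 : ℝ) (a : Fin m → ℝ)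
    (z : ∀ i, Fin (d i) → ℝ) : ∀ i, Fin (d i) → ℝ :=
  fun i ji => a0 * z i ji + a i * sigma f p i z ji

/-- `Q_i(x) = ‖∇_i f(x)‖_{p_i'} / ∏_{k ≠ i} ‖x_k‖_{p_k}`. -/
def Qi (f : (∀ i, Fin (d i)) → ℝ) (p : Fin m → ℝ) (i : Fin m)
    (x : ∀ l, Fin (d l) → ℝ) : ℝ :=
  pnorm (conjExp (p i)) (grad f i x) / ∏ k ∈ Finset.univ.erase i, pnorm (p k) (x k)

/-- A critical point of `Q_i` with critical value `lam`. -/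
def IsCritQi (f : (∀ i, Fin (d i)) → ℝ) (p : Fin m → ℝ) (i : Fin m) (lam : ℝ)
    (x : ∀ l, Fin (d l) → ℝ) : Prop :=
  (∀ k, k ≠ i → pnorm (p k) (x k) = 1) ∧ grad f i x ≠ 0 ∧
  ∀ k, k ≠ i → ∀ jk,
    sik f p i k x jk = lam ^ (conjExp (p i) * (conjExp (p k) - 1)) * x k jk

/-- Collatz–Wielandt ratio `γ_i^-`. -/
def gammaMinus (f : (∀ i, Fin (d i)) → ℝ) (p : Fin m → ℝ) (i : Fin m)
    (x : ∀ l, Fin (d l) → ℝ) : ℝ :=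
  ∏ k ∈ Finset.univ.erase i, ⨅ jk : Fin (d k), (sik f p i k x jk / x k jk) ^ (p k - 1)

/-- Collatz–Wielandt ratio `γ_i^+`. -/
def gammaPlus (f : (∀ i, Fin (d i)) → ℝ) (p : Fin m → ℝ) (i : Fin m)
    (x : ∀ l, Fin (d l) → ℝ) : ℝ :=
  ∏ k ∈ Finset.univ.erase i, ⨆ jk : Fin (d k), (sik f p i k x jk / x k jk) ^ (p k - 1)

/-- The power-method map `G(x) = (s_{i,k}(x)/‖s_{i,k}(x)‖_{p_k})_{k≠i}`. -/
def Gmap (f : (∀ i, Fin (d i)) → ℝ) (p : Fin m → ℝ) (i : Fin m)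
    (x : ∀ l, Fin (d l) → ℝ) : ∀ l, Fin (d l) → ℝ :=
  fun k jk => sik f p i k x jk / pnorm (p k) (sik f p i k x)

/-- The Hilbert-type metric `μ` on `S^{d-d_i}_{++}`. -/
def mu (p : Fin m → ℝ) (i : Fin m) (x y : ∀ l, Fin (d l) → ℝ) : ℝ :=
  Real.log (∏ l ∈ Finset.univ.erase i,
    (⨆ jl : Fin (d l), (x l jl / y l jl) ^ (p l - 1)) /
    (⨅ jl : Fin (d l), (x l jl / y l jl) ^ (p l - 1)))


/-! ### Auxiliary lemmas -/

section Aux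

variable {m : ℕ} {d : Fin m → ℕ}

lemma pnorm_nonneg (q : ℝ) {n : ℕ} (y : Fin n → ℝ) : 0 ≤ pnorm q y :=
  Real.rpow_nonneg (Finset.sum_nonneg fun j _ => Real.rpow_nonneg (abs_nonneg _) _) _

lemma sum_abs_rpow_eq_one {q : ℝ} (hq : 0 < q) {n : ℕ} {y : Fin n → ℝ}
    (h : pnorm q y = 1) : ∑ j, |y j| ^ q = 1 := by
  have hS : 0 ≤ ∑ j, |y j| ^ q :=
    Finset.sum_nonneg fun j _ => Real.rpow_nonneg (abs_nonneg _) _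
  have h2 := congrArg (fun t : ℝ => t ^ q) h
  simp only [pnorm] at h2
  rw [← Real.rpow_mul hS, one_div, inv_mul_cancel₀ hq.ne', Real.rpow_one,
    Real.one_rpow] at h2
  exact h2

lemma pnorm_zero {q : ℝ} (hq : 0 < q) {n : ℕ} : pnorm q (0 : Fin n → ℝ) = 0 := by
  simp [pnorm, Real.zero_rpow hq.ne']
  rw [Real.zero_rpow (inv_ne_zero hq.ne')]

lemma ne_zero_of_pnorm_one {q : ℝ} (hq : 0 < q) {n : ℕ} {y : Fin n → ℝ}
    (h : pnorm q y = 1) : y ≠ 0 := by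
  intro h0; rw [h0, pnorm_zero hq] at h; norm_num at h

lemma pnorm_pos {q : ℝ} (hq : 0 < q) {n : ℕ} {y : Fin n → ℝ} (hy : y ≠ 0) :
    0 < pnorm q y := by
  obtain ⟨j, hj⟩ := Function.ne_iff.1 hy
  have h1 : (0:ℝ) < |y j| ^ q := Real.rpow_pos_of_pos (abs_pos.2 hj) _
  have h2 : (0:ℝ) < ∑ j, |y j| ^ q :=
    lt_of_lt_of_le h1 (Finset.single_le_sum
      (fun j _ => Real.rpow_nonneg (abs_nonneg _) _) (Finset.mem_univ j))
  exact Real.rpow_pos_of_pos h2 _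

lemma pnorm_smul {q : ℝ} (hq : 0 < q) {n : ℕ} {c : ℝ} (hc : 0 ≤ c) (y : Fin n → ℝ) :
    pnorm q (fun j => c * y j) = c * pnorm q y := by
  unfold pnorm
  have h1 : ∀ j : Fin n, |c * y j| ^ q = c ^ q * |y j| ^ q := by
    intro j
    rw [abs_mul, abs_of_nonneg hc, Real.mul_rpow hc (abs_nonneg _)]
  simp only [h1, ← Finset.mul_sum]
  rw [Real.mul_rpow (Real.rpow_nonneg hc _)
    (Finset.sum_nonneg fun j _ => Real.rpow_nonneg (abs_nonneg _) _),
    ← Real.rpow_mul hc, mul_one_div, div_self hq.ne', Real.rpow_one]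

lemma form_nonneg {f : (∀ i, Fin (d i)) → ℝ} (hf0 : ∀ j, 0 ≤ f j)
    {x : ∀ i, Fin (d i) → ℝ} (hx : ∀ l j, 0 ≤ x l j) : 0 ≤ form f x :=
  Finset.sum_nonneg fun j _ => mul_nonneg (hf0 j)
    (Finset.prod_nonneg fun l _ => hx l (j l))

lemma abs_form_le {f : (∀ i, Fin (d i)) → ℝ} (hf0 : ∀ j, 0 ≤ f j)
    (x : ∀ i, Fin (d i) → ℝ) :
    |form f x| ≤ form f (fun l j => |x l j|) := by
  refine le_trans (Finset.abs_sum_le_sum_abs _ _) (le_of_eq ?_)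
  refine Finset.sum_congr rfl fun j _ => ?_
  rw [abs_mul, abs_of_nonneg (hf0 j), Finset.abs_prod]

lemma form_smul (f : (∀ i, Fin (d i)) → ℝ) (c : Fin m → ℝ)
    (x : ∀ i, Fin (d i) → ℝ) :
    form f (fun l j => c l * x l j) = (∏ l, c l) * form f x := by
  unfold form
  rw [Finset.mul_sum]
  refine Finset.sum_congr rfl fun j _ => ?_
  rw [Finset.prod_mul_distrib]; ring

lemma prod_update_split (x : ∀ i, Fin (d i) → ℝ) (i : Fin m) (y : Fin (d i) → ℝ)
    (j : ∀ i, Fin (d i)) :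
    ∏ l, (Function.update x i y) l (j l) = y (j i) * ∏ l ∈ Finset.univ.erase i, x l (j l) := by
  rw [← Finset.mul_prod_erase Finset.univ _ (Finset.mem_univ i)]
  congr 1
  · rw [Function.update_self]
  · refine Finset.prod_congr rfl fun l hl => ?_
    rw [Function.update_of_ne (Finset.ne_of_mem_erase hl)]

lemma form_update (f : (∀ i, Fin (d i)) → ℝ) (x : ∀ i, Fin (d i) → ℝ) (i : Fin m)
    (y : Fin (d i) → ℝ) :
    form f (Function.update x i y) = ∑ ji, y ji * grad f i x ji := by
  have key : ∀ z : Fin (d i) → ℝ, form f (Function.update x i z)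
      = ∑ j : ∀ i, Fin (d i), f j * (z (j i) * ∏ l ∈ Finset.univ.erase i, x l (j l)) := by
    intro z
    exact Finset.sum_congr rfl fun j _ => by rw [prod_update_split]
  rw [key]
  have hgrad : ∀ ji, grad f i x ji
      = ∑ j : ∀ i, Fin (d i), f j * ((if j i = ji then (1:ℝ) else 0) *
          ∏ l ∈ Finset.univ.erase i, x l (j l)) := by
    intro ji; exact key _
  calc ∑ j : ∀ i, Fin (d i), f j * (y (j i) * ∏ l ∈ Finset.univ.erase i, x l (j l))
      = ∑ j : ∀ i, Fin (d i), ∑ ji, (if ji = j i then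
          y ji * (f j * ∏ l ∈ Finset.univ.erase i, x l (j l)) else 0) := by
        refine Finset.sum_congr rfl fun j _ => ?_
        rw [Finset.sum_ite_eq' Finset.univ (j i)
          (fun ji => y ji * (f j * ∏ l ∈ Finset.univ.erase i, x l (j l)))]
        simp; ring
    _ = ∑ ji, y ji * grad f i x ji := by
        rw [Finset.sum_comm]
        refine Finset.sum_congr rfl fun ji _ => ?_
        rw [hgrad ji, Finset.mul_sum]
        refine Finset.sum_congr rfl fun j _ => ?_
        by_cases h : j i = ji
        · simp [h]
        · simp [h, Ne.symm h]

lemma abs_le_pnorm {q : ℝ} (hq : 0 < q) {n : ℕ} (y : Fin n → ℝ) (j : Fin n) :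
    |y j| ≤ pnorm q y := by
  have h1 : |y j| ^ q ≤ ∑ a, |y a| ^ q :=
    Finset.single_le_sum (fun a _ => Real.rpow_nonneg (abs_nonneg _) _) (Finset.mem_univ j)
  have h2 : (|y j| ^ q) ^ ((1:ℝ)/q) ≤ (∑ a, |y a| ^ q) ^ ((1:ℝ)/q) :=
    Real.rpow_le_rpow (Real.rpow_nonneg (abs_nonneg _) _) h1 (by positivity)
  rwa [← Real.rpow_mul (abs_nonneg _), mul_one_div, div_self hq.ne', Real.rpow_one] at h2

lemma continuous_rpow_const {q : ℝ} (hq : 0 ≤ q) : Continuous (fun t : ℝ => t ^ q) :=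
  continuous_iff_continuousAt.2 fun x => Real.continuousAt_rpow_const x q (Or.inr hq)

lemma continuous_pnorm {q : ℝ} (hq : 0 < q) {n : ℕ} :
    Continuous (fun y : Fin n → ℝ => pnorm q y) := by
  unfold pnorm
  exact (continuous_rpow_const (by positivity)).comp
    (continuous_finset_sum _ fun j _ =>
      (continuous_rpow_const hq.le).comp ((continuous_apply j).abs))

lemma continuous_form (f : (∀ i, Fin (d i)) → ℝ) :
    Continuous (fun x : ∀ i, Fin (d i) → ℝ => form f x) := by
  unfold form
  exact continuous_finset_sum _ fun j _ => continuous_const.mul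
    (continuous_finset_prod _ fun i _ =>
      (continuous_apply (j i)).comp (continuous_apply i))

lemma exists_maximizer (hd : ∀ k, 0 < d k) (p : Fin m → ℝ) (hp : ∀ k, 1 < p k)
    (f : (∀ i, Fin (d i)) → ℝ) :
    ∃ xs : ∀ i, Fin (d i) → ℝ, (∀ l j, 0 ≤ xs l j) ∧ (∀ l, pnorm (p l) (xs l) = 1) ∧
      ∀ z : ∀ i, Fin (d i) → ℝ, (∀ l j, 0 ≤ z l j) → (∀ l, pnorm (p l) (z l) = 1) →
        form f z ≤ form f xs := by
  have hp0 : ∀ l, (0:ℝ) < p l := fun l => lt_trans one_pos (hp l)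
  set K : Set (∀ i, Fin (d i) → ℝ) :=
    {x | (∀ l j, 0 ≤ x l j) ∧ ∀ l, pnorm (p l) (x l) = 1} with hK
  have hclosed : IsClosed K := by
    have h1 : IsClosed {x : ∀ i, Fin (d i) → ℝ | ∀ l j, 0 ≤ x l j} := by
      have : {x : ∀ i, Fin (d i) → ℝ | ∀ l j, 0 ≤ x l j} =
          ⋂ l, ⋂ j, {x : ∀ i, Fin (d i) → ℝ | 0 ≤ x l j} := by
        ext x; simp [Set.mem_iInter]
      rw [this]
      exact isClosed_iInter fun l => isClosed_iInter fun j =>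
        isClosed_le continuous_const ((continuous_apply j).comp (continuous_apply l))
    have h2 : IsClosed {x : ∀ i, Fin (d i) → ℝ | ∀ l, pnorm (p l) (x l) = 1} := by
      have : {x : ∀ i, Fin (d i) → ℝ | ∀ l, pnorm (p l) (x l) = 1} =
          ⋂ l, {x : ∀ i, Fin (d i) → ℝ | pnorm (p l) (x l) = 1} := by
        ext x; simp [Set.mem_iInter]
      rw [this]
      exact isClosed_iInter fun l => isClosed_eq
        ((continuous_pnorm (hp0 l)).comp (continuous_apply l)) continuous_const
    exact h1.inter h2
  have hcpt : IsCompact K := by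
    refine IsCompact.of_isClosed_subset
      (isCompact_univ_pi fun l => isCompact_closedBall (0 : Fin (d l) → ℝ) 1) hclosed ?_
    intro x hx
    refine Set.mem_univ_pi.2 fun l => ?_
    rw [Metric.mem_closedBall, dist_zero_right]
    refine (pi_norm_le_iff_of_nonneg zero_le_one).2 fun j => ?_
    rw [Real.norm_eq_abs]
    calc |x l j| ≤ pnorm (p l) (x l) := abs_le_pnorm (hp0 l) _ _
      _ = 1 := hx.2 l
  have hne : K.Nonempty := by
    refine ⟨fun l a => if a = ⟨0, hd l⟩ then 1 else 0, fun l j => by positivity, fun l => ?_⟩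
    unfold pnorm
    have : ∀ a : Fin (d l), |if a = ⟨0, hd l⟩ then (1:ℝ) else 0| ^ (p l)
        = if a = ⟨0, hd l⟩ then (1:ℝ) else 0 := by
      intro a
      by_cases h : a = ⟨0, hd l⟩ <;>
        simp [h, Real.zero_rpow (hp0 l).ne', Real.one_rpow]
    rw [Finset.sum_congr rfl fun a _ => this a, Finset.sum_ite_eq' Finset.univ _ (fun _ => (1:ℝ))]
    simp [Real.one_rpow]
  obtain ⟨xs, hxsK, hmax⟩ := hcpt.exists_isMaxOn hne (continuous_form f).continuousOn
  exact ⟨xs, hxsK.1, hxsK.2, fun z h1 h2 => hmax (Set.mem_setOf.2 ⟨h1, h2⟩)⟩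

lemma exists_cross_edge {V : Type*} {G : SimpleGraph V} {Z : Set V} {u v : V}
    (w : G.Walk u v) : u ∈ Z → v ∉ Z → ∃ a b, G.Adj a b ∧ a ∈ Z ∧ b ∉ Z := by
  induction w with
  | nil => intro hu hv; exact absurd hu hv
  | cons h q ih =>
    intro hu hv
    rename_i a b c
    by_cases hb : b ∈ Z
    · exact ih hb hv
    · exact ⟨a, b, h, hu, hb⟩

lemma one_lt_conjExp {q : ℝ} (hq : 1 < q) : 1 < conjExp q := by
  unfold conjExp
  rw [lt_div_iff₀ (by linarith)]
  linarith

lemma one_add_pow_le {u : ℝ} (h0 : 0 ≤ u) (h1 : u ≤ 1) (n : ℕ) :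
    (1 + u) ^ n ≤ 1 + ((2:ℝ) ^ n - 1) * u := by
  induction n with
  | zero => simp
  | succ n ih =>
    have h2 : (1:ℝ) ≤ 2 ^ n := one_le_pow₀ (by norm_num)
    have h3 : (0:ℝ) ≤ 1 + ((2:ℝ)^n - 1) * u := by nlinarith
    calc (1+u)^(n+1) = (1+u)^n * (1+u) := by ring
      _ ≤ (1 + ((2:ℝ)^n - 1) * u) * (1+u) := by nlinarith
      _ ≤ 1 + ((2:ℝ)^(n+1) - 1) * u := by
          have h4 : (2:ℝ)^(n+1) = 2 * 2^n := by ring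
          nlinarith [mul_nonneg (mul_nonneg (sub_nonneg.2 h2) h0) (sub_nonneg.2 h1)]
  
lemma exists_exponents {m : ℕ} (hm : 2 ≤ m) (p : Fin m → ℝ) (hp : ∀ k, 1 < p k)
    (i : Fin m) (hpi : ∀ k, k ≠ i → ((m : ℝ) - 1) * conjExp (p i) ≤ p k)
    (L : Finset (Fin m)) (hLne : L.Nonempty) (hLp : L ≠ Finset.univ) :
    ∃ s : Fin m → ℝ, (∀ l ∈ L, 0 < s l) ∧
      ∀ l ∈ L, (∑ l' ∈ L, s l') < s l * p l := by
  have hcE : 1 < conjExp (p i) := one_lt_conjExp (hp i)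
  have hcards : L.card < m := by
    have := Finset.card_lt_card (Finset.ssubset_univ_iff.2 hLp)
    simpa using this
  have hcard : (L.card : ℝ) ≤ (m : ℝ) - 1 := by
    have : (L.card : ℝ) + 1 ≤ (m : ℝ) := by exact_mod_cast hcards
    linarith
  set P : ℝ := ((m : ℝ) - 1) * conjExp (p i) with hP
  by_cases hiL : i ∈ L
  · -- case i ∈ L
    set t : ℝ := ((L.erase i).card : ℝ) with ht
    have htcard : (L.erase i).card = L.card - 1 := Finset.card_erase_of_mem hiL
    have hLpos : 1 ≤ L.card := Finset.card_pos.2 hLne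
    have ht1 : t ≤ (m : ℝ) - 2 := by
      rw [ht, htcard]
      have : ((L.card - 1 : ℕ) : ℝ) = (L.card : ℝ) - 1 := by
        rw [Nat.cast_sub hLpos]; norm_num
      rw [this]; linarith
    have ht0 : 0 ≤ t := Nat.cast_nonneg _
    have hpi1 : (0:ℝ) < p i - 1 := by linarith [hp i]
    set σ : ℝ := t / (p i - 1) with hσ
    set U : ℝ := P - t with hU
    have hσ0 : 0 ≤ σ := div_nonneg ht0 hpi1.le
    have hcEval : conjExp (p i) = p i / (p i - 1) := rfl
    have hkey : σ < U := by
      rw [hσ, hU, hP, hcEval, div_lt_iff₀ hpi1]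
      have hm2 : t < (m:ℝ) - 1 := by linarith
      have hfrac : p i / (p i - 1) * (p i - 1) = p i := div_mul_cancel₀ _ hpi1.ne'
      have h5 : ((m:ℝ)-1) * (p i/(p i-1) * (p i - 1)) = ((m:ℝ)-1) * p i := by rw [hfrac]
      have h6 : t * p i < ((m:ℝ)-1) * p i :=
        mul_lt_mul_of_pos_right hm2 (by linarith [hp i])
      nlinarith [h5, h6]
    set s0 : ℝ := (σ + U) / 2 with hs0
    have hs0σ : σ < s0 := by rw [hs0]; linarith
    have hs0U : s0 < U := by rw [hs0]; linarith
    have hs0pos : 0 < s0 := lt_of_le_of_lt hσ0 hs0σ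
    refine ⟨fun l => if l = i then s0 else 1, fun l _ => ?_, fun l hl => ?_⟩
    · by_cases h : l = i <;> simp [h, hs0pos]
    · have hsum : (∑ l' ∈ L, if l' = i then s0 else 1) = s0 + t := by
        rw [← Finset.add_sum_erase L _ hiL]
        simp only [if_pos rfl]
        congr 1
        rw [Finset.sum_congr rfl (fun l' hl' => if_neg (Finset.ne_of_mem_erase hl'))]
        simp [ht]
      rw [hsum]
      by_cases h : l = i
      · subst h
        simp only [ite_true, eq_self_iff_true, if_true, if_pos rfl]
        have hσt : σ * (p l - 1) = t := by rw [hσ]; field_simp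
        nlinarith [hσt, mul_lt_mul_of_pos_right hs0σ hpi1]
      · simp only [if_neg h, one_mul]
        have : P ≤ p l := hpi l h
        linarith
  · -- case i ∉ L
    refine ⟨fun _ => 1, fun l _ => one_pos, fun l hl => ?_⟩
    have hli : l ≠ i := fun h => hiL (h ▸ hl)
    have hPl : P ≤ p l := hpi l hli
    have hm1 : (1:ℝ) ≤ (m:ℝ) - 1 := by
      have : (2:ℝ) ≤ (m:ℝ) := by exact_mod_cast hm
      linarith
    have : ((m:ℝ) - 1) < P := by
      rw [hP]
      nlinarith [hcE, hm1]
    simp only [Finset.sum_const, nsmul_eq_mul, mul_one, one_mul]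
    calc (L.card : ℝ) ≤ (m:ℝ) - 1 := hcard
      _ < P := this
      _ ≤ p l := hPl

end Aux

/-- a nonnegative weakly irreducible tensor with
`(m-1) p_i' ≤ p_k` for all `k ≠ i` has a strictly positive singular vector
attaining the tensor norm. -/
theorem statement_11 {m : ℕ} {d : Fin m → ℕ} (hm : 2 ≤ m) (hd : ∀ k, 0 < d k)
    (p : Fin m → ℝ) (hp : ∀ k, 1 < p k)
    (f : (∀ i, Fin (d i)) → ℝ) (hf0 : ∀ j, 0 ≤ f j)
    (hwirr : WeaklyIrreducible f)
    (i : Fin m) (hpi : ∀ k, k ≠ i → ((m : ℝ) - 1) * conjExp (p i) ≤ p k) :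
    ∃ (lam : ℝ) (x : ∀ l, Fin (d l) → ℝ),
      (∀ l jl, 0 < x l jl) ∧ IsSingular f p lam x ∧ Qform f p x = tnorm f p := by
  classical
  have hp0 : ∀ l, (0:ℝ) < p l := fun l => lt_trans one_pos (hp l)
  obtain ⟨xs, hxs0, hxs1, hmaxK⟩ := exists_maximizer hd p hp f
  set lam := form f xs with hlam
  -- master bound
  have master : ∀ x : ∀ l, Fin (d l) → ℝ, (∀ l j, 0 ≤ x l j) → (∀ l, x l ≠ 0) →
      form f x ≤ lam * ∏ l, pnorm (p l) (x l) := by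
    intro x hx hxne
    set N : Fin m → ℝ := fun l => pnorm (p l) (x l) with hN
    have hNpos : ∀ l, 0 < N l := fun l => pnorm_pos (hp0 l) (hxne l)
    set w : ∀ l, Fin (d l) → ℝ := fun l j => (N l)⁻¹ * x l j with hw
    have hw0 : ∀ l j, 0 ≤ w l j := fun l j =>
      mul_nonneg (inv_nonneg.2 (hNpos l).le) (hx l j)
    have hw1 : ∀ l, pnorm (p l) (w l) = 1 := by
      intro l
      have : pnorm (p l) (fun j => (N l)⁻¹ * x l j) = (N l)⁻¹ * N l :=
        pnorm_smul (hp0 l) (inv_nonneg.2 (hNpos l).le) (x l)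
      rw [hw]
      rw [this, inv_mul_cancel₀ (hNpos l).ne']
    have h2 := hmaxK w hw0 hw1
    have h3 : form f w = (∏ l, (N l)⁻¹) * form f x := form_smul f _ x
    have h4 : (∏ l, N l) * (∏ l, (N l)⁻¹) = 1 := by
      rw [← Finset.prod_mul_distrib]
      rw [Finset.prod_congr rfl fun l _ => mul_inv_cancel₀ (hNpos l).ne']
      exact Finset.prod_const_one
    calc form f x = (∏ l, N l) * form f w := by
          rw [h3, ← mul_assoc, h4, one_mul]
      _ ≤ (∏ l, N l) * lam :=
          mul_le_mul_of_nonneg_left h2 (Finset.prod_nonneg fun l _ => (hNpos l).le)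
      _ = lam * ∏ l, N l := mul_comm _ _
  -- a positive entry of f exists
  have hexpos : ∃ j0 : ∀ l, Fin (d l), 0 < f j0 := by
    obtain ⟨k, hk⟩ : ∃ k : Fin m, k ≠ i :=
      Fintype.exists_ne_of_one_lt_card (by simpa using by omega : 1 < Fintype.card (Fin m)) i
    have hreach := hwirr.preconnected ⟨i, ⟨0, hd i⟩⟩ ⟨k, ⟨0, hd k⟩⟩
    obtain ⟨w⟩ := hreach
    obtain ⟨a, b, hab, -, -⟩ := exists_cross_edge (Z := {v : (k : Fin m) × Fin (d k) | v.1 = i})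
      w rfl (by simpa using hk)
    obtain ⟨-, jt, -, -, hfj⟩ := hab
    exact ⟨jt, hfj⟩
  -- lam is positive
  have hlampos : 0 < lam := by
    obtain ⟨j0, hj0⟩ := hexpos
    set z : ∀ l, Fin (d l) → ℝ := fun l _ => ((d l : ℝ)) ^ (-(1:ℝ)/(p l)) with hz
    have hdpos : ∀ l, (0:ℝ) < (d l : ℝ) := fun l => Nat.cast_pos.2 (hd l)
    have hzpos : ∀ l a, 0 < z l a := fun l a => Real.rpow_pos_of_pos (hdpos l) _
    have hz1 : ∀ l, pnorm (p l) (z l) = 1 := by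
      intro l
      unfold pnorm
      have hc : ∀ a : Fin (d l), |z l a| ^ (p l) = (d l : ℝ)⁻¹ := by
        intro a
        rw [abs_of_pos (hzpos l a)]
        have h1 : ((d l:ℝ) ^ (-(1:ℝ)/(p l))) ^ (p l)
            = (d l : ℝ) ^ ((-(1:ℝ)/(p l)) * p l) := (Real.rpow_mul (hdpos l).le _ _).symm
        have h2 : (-(1:ℝ)/(p l)) * p l = -1 := by
          rw [div_mul_cancel₀ _ (hp0 l).ne']
        rw [hz]
        rw [h1, h2, Real.rpow_neg_one]
      rw [Finset.sum_congr rfl fun a _ => hc a, Finset.sum_const, Finset.card_univ,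
        Fintype.card_fin, nsmul_eq_mul, mul_inv_cancel₀ (hdpos l).ne', Real.one_rpow]
    have hformz : 0 < form f z := by
      have hterm : 0 < f j0 * ∏ l, z l (j0 l) :=
        mul_pos hj0 (Finset.prod_pos fun l _ => hzpos l (j0 l))
      exact lt_of_lt_of_le hterm (Finset.single_le_sum
        (fun j _ => mul_nonneg (hf0 j) (Finset.prod_nonneg fun l _ => (hzpos l (j l)).le))
        (Finset.mem_univ j0))
    exact lt_of_lt_of_le hformz (hmaxK z (fun l a => (hzpos l a).le) hz1)
  -- the maximizer is strictly positive
  have hxspos : ∀ l j, 0 < xs l j := by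
    by_contra hcon
    push_neg at hcon
    obtain ⟨l1, j1, hle⟩ := hcon
    have hz1 : xs l1 j1 = 0 := le_antisymm hle (hxs0 l1 j1)
    obtain ⟨j2, hj2⟩ := Function.ne_iff.1 (ne_zero_of_pnorm_one (hp0 l1) (hxs1 l1))
    set Z : Set ((k : Fin m) × Fin (d k)) := {v | xs v.1 v.2 = 0} with hZ
    have hreach := hwirr.preconnected ⟨l1, j1⟩ ⟨l1, j2⟩
    obtain ⟨w⟩ := hreach
    obtain ⟨a, b, hab, haZ, hbZ⟩ := exists_cross_edge (Z := Z) w hz1 hj2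
    obtain ⟨hne1, jt, hja, hjb, hfjt⟩ := hab
    set L : Finset (Fin m) := Finset.univ.filter (fun l => xs l (jt l) = 0) with hL
    have hmemL : ∀ l, l ∈ L ↔ xs l (jt l) = 0 := fun l => by
      rw [hL]; simp [Finset.mem_filter]
    have haL : a.1 ∈ L := (hmemL a.1).2 (by rw [hja]; exact haZ)
    have hbL : b.1 ∉ L := fun hmem =>
      hbZ (show xs b.1 b.2 = 0 by rw [← hjb]; exact (hmemL b.1).1 hmem)
    have hLne : L.Nonempty := ⟨a.1, haL⟩
    have hLuniv : L ≠ Finset.univ := fun h => hbL (by rw [h]; exact Finset.mem_univ b.1)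
    obtain ⟨s, hspos, hslt⟩ := exists_exponents hm p hp i hpi L hLne hLuniv
    set g : ℝ := ∑ l' ∈ L, s l' with hg
    have hgpos : 0 < g := Finset.sum_pos hspos hLne
    set C : ℝ := f jt * ∏ l ∈ Lᶜ, xs l (jt l) with hC
    have hCpos : 0 < C := by
      refine mul_pos hfjt (Finset.prod_pos fun l hl => ?_)
      have hne : ¬ xs l (jt l) = 0 := by
        rw [← hmemL l]; exact Finset.mem_compl.1 hl
      exact lt_of_le_of_ne (hxs0 l (jt l)) (Ne.symm hne)
    obtain ⟨lh, hlh, hmin⟩ := Finset.exists_min_image L (fun l => s l * p l) hLne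
    set qs : ℝ := s lh * p lh with hqs
    have hgq : g < qs := hslt lh hlh
    have hqspos : 0 < qs := hgpos.trans hgq
    set D : ℝ := 2 ^ (L.card) with hD
    have hD1 : (1:ℝ) ≤ D := one_le_pow₀ (by norm_num)
    have hDpos : 0 < D := lt_of_lt_of_le one_pos hD1
    have key : ∀ ε : ℝ, 0 < ε → ε ≤ 1 → lam + C * ε ^ g ≤ lam * (1 + D * ε ^ qs) := by
      intro ε hε0 hε1
      set y : ∀ l, Fin (d l) → ℝ :=
        fun l a => xs l a + if l ∈ L ∧ a = jt l then ε ^ (s l) else 0 with hy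
      have hy0 : ∀ l a, xs l a ≤ y l a := by
        intro l a
        have h : (0:ℝ) ≤ if l ∈ L ∧ a = jt l then ε ^ (s l) else 0 := by
          by_cases h : l ∈ L ∧ a = jt l
          · simp [h, (Real.rpow_pos_of_pos hε0 (s l)).le]
          · simp [h]
        simp only [hy]
        linarith
      have hynn : ∀ l a, 0 ≤ y l a := fun l a => le_trans (hxs0 l a) (hy0 l a)
      have hyL : ∀ l ∈ L, y l (jt l) = ε ^ (s l) := by
        intro l hl
        simp [hy, hl, (hmemL l).1 hl]
      have hyNL : ∀ l, l ∉ L → y l = xs l := by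
        intro l hl; funext a
        simp only [hy]
        rw [if_neg (fun hcontra => hl hcontra.1), add_zero]
      have hprod_x : (∏ l, xs l (jt l)) = 0 :=
        Finset.prod_eq_zero (Finset.mem_univ a.1) (by rw [hja]; exact haZ)
      have hprod_y : (∏ l, y l (jt l)) = ε ^ g * ∏ l ∈ Lᶜ, xs l (jt l) := by
        rw [← Finset.prod_mul_prod_compl L (fun l => y l (jt l))]
        congr 1
        · rw [Finset.prod_congr rfl hyL, hg]
          exact (Real.rpow_sum_of_pos hε0 s L).symm
        · exact Finset.prod_congr rfl fun l hl => by rw [hyNL l (Finset.mem_compl.1 hl)]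
      have hform_lb : lam + C * ε ^ g ≤ form f y := by
        have hterm : ∀ j : ∀ l, Fin (d l), 0 ≤ f j * (∏ l, y l (j l) - ∏ l, xs l (j l)) :=
          fun j => mul_nonneg (hf0 j) (sub_nonneg.2 (Finset.prod_le_prod
            (fun l _ => hxs0 l (j l)) (fun l _ => hy0 l (j l))))
        have hsingle : f jt * (∏ l, y l (jt l) - ∏ l, xs l (jt l))
            ≤ ∑ j : ∀ l, Fin (d l), f j * (∏ l, y l (j l) - ∏ l, xs l (j l)) :=
          Finset.single_le_sum (fun j _ => hterm j) (Finset.mem_univ jt)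
        have hsum_eq : (∑ j : ∀ l, Fin (d l), f j * (∏ l, y l (j l) - ∏ l, xs l (j l)))
            = form f y - form f xs := by
          unfold form
          rw [← Finset.sum_sub_distrib]
          exact Finset.sum_congr rfl fun j _ => by ring
        rw [hsum_eq, hprod_y, hprod_x, sub_zero] at hsingle
        have heq : f jt * (ε ^ g * ∏ l ∈ Lᶜ, xs l (jt l)) = C * ε ^ g := by
          rw [hC]; ring
        rw [heq, ← hlam] at hsingle
        linarith
      have hyne : ∀ l, y l ≠ 0 := by
        intro l
        by_cases hl : l ∈ L
        · intro h0
          have hcf := congrFun h0 (jt l)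
          rw [hyL l hl] at hcf
          exact absurd hcf (Real.rpow_pos_of_pos hε0 _).ne'
        · rw [hyNL l hl]; exact ne_zero_of_pnorm_one (hp0 l) (hxs1 l)
      have hpn : ∀ l ∈ L, pnorm (p l) (y l) = (1 + ε ^ (s l * p l)) ^ (1/(p l)) := by
        intro l hl
        unfold pnorm
        congr 1
        have h1 : (∑ a, |y l a| ^ (p l))
            = |y l (jt l)| ^ (p l) + ∑ a ∈ Finset.univ.erase (jt l), |y l a| ^ (p l) :=
          (Finset.add_sum_erase _ _ (Finset.mem_univ (jt l))).symm
        have h2 : ∀ a ∈ Finset.univ.erase (jt l), |y l a| ^ (p l) = |xs l a| ^ (p l) := by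
          intro a ha
          have hane : a ≠ jt l := Finset.ne_of_mem_erase ha
          simp only [hy]
          rw [if_neg (fun hco => hane hco.2), add_zero]
        have h3 : (∑ a, |xs l a| ^ (p l))
            = |xs l (jt l)| ^ (p l) + ∑ a ∈ Finset.univ.erase (jt l), |xs l a| ^ (p l) :=
          (Finset.add_sum_erase _ _ (Finset.mem_univ (jt l))).symm
        have h4 : |xs l (jt l)| = 0 := by rw [(hmemL l).1 hl, abs_zero]
        have h5 : (∑ a ∈ Finset.univ.erase (jt l), |xs l a| ^ (p l)) = 1 := by
          have h6 := sum_abs_rpow_eq_one (hp0 l) (hxs1 l)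
          rw [h3, h4, Real.zero_rpow (hp0 l).ne', zero_add] at h6
          exact h6
        rw [h1, Finset.sum_congr rfl h2, h5, hyL l hl,
          abs_of_pos (Real.rpow_pos_of_pos hε0 _), ← Real.rpow_mul hε0.le]
        ring
      have hub := master y hynn hyne
      have hprod_pn : (∏ l, pnorm (p l) (y l)) ≤ (1 + ε ^ qs) ^ (L.card) := by
        rw [← Finset.prod_mul_prod_compl L (fun l => pnorm (p l) (y l))]
        have hc1 : (∏ l ∈ Lᶜ, pnorm (p l) (y l)) = 1 :=
          Finset.prod_eq_one fun l hl => by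
            rw [hyNL l (Finset.mem_compl.1 hl)]; exact hxs1 l
        rw [hc1, mul_one]
        have hfac : ∀ l ∈ L, pnorm (p l) (y l) ≤ 1 + ε ^ qs := by
          intro l hl
          rw [hpn l hl]
          have hb1 : (1:ℝ) ≤ 1 + ε ^ (s l * p l) :=
            le_add_of_nonneg_right (Real.rpow_nonneg hε0.le _)
          calc (1 + ε ^ (s l * p l)) ^ (1/(p l)) ≤ (1 + ε ^ (s l * p l)) ^ (1:ℝ) :=
                Real.rpow_le_rpow_of_exponent_le hb1
                  (by rw [div_le_one (hp0 l)]; exact (hp l).le)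
            _ = 1 + ε ^ (s l * p l) := Real.rpow_one _
            _ ≤ 1 + ε ^ qs := by
                have := Real.rpow_le_rpow_of_exponent_ge hε0 hε1 (hmin l hl)
                linarith
        calc (∏ l ∈ L, pnorm (p l) (y l)) ≤ ∏ l ∈ L, (1 + ε ^ qs) :=
              Finset.prod_le_prod (fun l hl => pnorm_nonneg _ _) hfac
          _ = (1 + ε ^ qs) ^ (L.card) := Finset.prod_const _
      have hpow : (1 + ε ^ qs) ^ (L.card) ≤ 1 + D * ε ^ qs := by
        have hu0 : 0 ≤ ε ^ qs := Real.rpow_nonneg hε0.le _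
        have hu1 : ε ^ qs ≤ 1 := Real.rpow_le_one hε0.le hε1 hqspos.le
        calc (1 + ε ^ qs) ^ (L.card) ≤ 1 + ((2:ℝ) ^ (L.card) - 1) * ε ^ qs :=
              one_add_pow_le hu0 hu1 _
          _ ≤ 1 + D * ε ^ qs := by rw [hD]; nlinarith [hu0]
      calc lam + C * ε ^ g ≤ form f y := hform_lb
        _ ≤ lam * ∏ l, pnorm (p l) (y l) := hub
        _ ≤ lam * ((1 + ε ^ qs) ^ (L.card)) :=
            mul_le_mul_of_nonneg_left hprod_pn hlampos.le
        _ ≤ lam * (1 + D * ε ^ qs) := mul_le_mul_of_nonneg_left hpow hlampos.le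
    set r : ℝ := qs - g with hr
    have hrpos : 0 < r := by rw [hr]; linarith
    set A : ℝ := (C / (lam * D)) ^ (1/r) with hA
    have hApos : 0 < A := Real.rpow_pos_of_pos (div_pos hCpos (mul_pos hlampos hDpos)) _
    set ε : ℝ := min (1/2) (A/2) with hε
    have hε0 : 0 < ε := lt_min (by norm_num) (by linarith)
    have hε1 : ε ≤ 1 := le_trans (min_le_left _ _) (by norm_num)
    have hεA : ε < A := lt_of_le_of_lt (min_le_right _ _) (by linarith)
    have hkey := key ε hε0 hε1
    have hCd : C * ε ^ g ≤ lam * D * ε ^ qs := by nlinarith [hkey]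
    have hεr : ε ^ r < C / (lam * D) := by
      have h1 : ε ^ r < A ^ r := Real.rpow_lt_rpow hε0.le hεA hrpos
      have h2 : A ^ r = C / (lam * D) := by
        rw [hA, ← Real.rpow_mul (div_pos hCpos (mul_pos hlampos hDpos)).le,
          one_div, inv_mul_cancel₀ hrpos.ne', Real.rpow_one]
      linarith
    have hsplit : ε ^ qs = ε ^ r * ε ^ g := by
      rw [← Real.rpow_add hε0]
      congr 1
      rw [hr]; ring
    have hgpos' : 0 < ε ^ g := Real.rpow_pos_of_pos hε0 _
    have hcontr : lam * D * ε ^ qs < C * ε ^ g := by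
      rw [hsplit]
      have hlt : lam * D * ε ^ r < C := by
        have := (lt_div_iff₀ (mul_pos hlampos hDpos)).1 hεr
        linarith
      calc lam * D * (ε ^ r * ε ^ g) = (lam * D * ε ^ r) * ε ^ g := by ring
        _ < C * ε ^ g := mul_lt_mul_of_pos_right hlt hgpos'
    linarith
  -- Euler–Lagrange equations
  have hEL : ∀ (i' : Fin m) (j0 : Fin (d i')),
      grad f i' xs j0 = lam * (xs i' j0) ^ (p i' - 1) := by
    intro i' j0
    set x : Fin (d i') → ℝ := xs i' with hx
    set c : Fin (d i') → ℝ := grad f i' xs with hc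
    have hxpos : ∀ a, 0 < x a := fun a => hxspos i' a
    have h_lin : ∀ y : Fin (d i') → ℝ,
        form f (Function.update xs i' y) = ∑ ji, y ji * c ji :=
      fun y => form_update f xs i' y
    have h_lam : (∑ ji, x ji * c ji) = lam := by
      have h := h_lin x
      rw [hx, Function.update_eq_self, ← hlam] at h
      exact h.symm
    have h_ineq : ∀ y : Fin (d i') → ℝ, (∀ a, 0 < y a) →
        (∑ ji, y ji * c ji) ≤ lam * pnorm (p i') y := by
      intro y hy
      rw [← h_lin y]
      have hnn : ∀ l a, 0 ≤ Function.update xs i' y l a := by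
        intro l a
        by_cases h : l = i'
        · subst h; rw [Function.update_self]; exact (hy a).le
        · rw [Function.update_of_ne h]; exact hxs0 l a
      have hne : ∀ l, Function.update xs i' y l ≠ 0 := by
        intro l
        by_cases h : l = i'
        · subst h; rw [Function.update_self]
          intro h0
          exact absurd (congrFun h0 ⟨0, hd l⟩) (ne_of_gt (hy _))
        · rw [Function.update_of_ne h]; exact ne_zero_of_pnorm_one (hp0 l) (hxs1 l)
      refine le_trans (master (Function.update xs i' y) hnn hne) (le_of_eq ?_)
      congr 1
      rw [← Finset.mul_prod_erase Finset.univ _ (Finset.mem_univ i'), Function.update_self]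
      have hprod : (∏ l ∈ Finset.univ.erase i',
          pnorm (p l) (Function.update xs i' y l)) = 1 := by
        refine Finset.prod_eq_one fun l hl => ?_
        rw [Function.update_of_ne (Finset.ne_of_mem_erase hl)]
        exact hxs1 l
      rw [hprod, mul_one]
    set pp := p i' with hpp
    have hppos : (0:ℝ) < pp := hp0 i'
    have hsum1 : (∑ a, (x a) ^ pp) = 1 := by
      have h := sum_abs_rpow_eq_one hppos (hxs1 i')
      calc (∑ a, (x a) ^ pp) = ∑ a, |x a| ^ pp :=
            Finset.sum_congr rfl fun a _ => by rw [abs_of_pos (hxpos a)]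
        _ = 1 := h
    set δ : Fin (d i') → ℝ := fun a => if a = j0 then (1:ℝ) else 0 with hδ
    set F : ℝ → ℝ := fun t =>
      (∑ a, (x a + t * δ a) * c a) - lam * (∑ a, (x a + t * δ a) ^ pp) ^ (1/pp) with hF
    have hF0 : F 0 = 0 := by
      simp only [hF, zero_mul, add_zero]
      rw [h_lam, hsum1, Real.one_rpow, mul_one, sub_self]
    have hlocmax : IsLocalMax F 0 := by
      have hnb : Set.Ioo (-(x j0)) (x j0) ∈ nhds (0:ℝ) :=
        Ioo_mem_nhds (neg_lt_zero.2 (hxpos j0)) (hxpos j0)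
      filter_upwards [hnb] with t ht
      rw [hF0]
      have hδj0 : δ j0 = 1 := by simp only [hδ, if_pos rfl]
      have hδne : ∀ a, a ≠ j0 → δ a = 0 := fun a h => by simp only [hδ, if_neg h]
      have hy : ∀ a, 0 < x a + t * δ a := by
        intro a
        by_cases h : a = j0
        · subst h; rw [hδj0, mul_one]
          have := ht.1; linarith
        · rw [hδne a h, mul_zero, add_zero]; exact hxpos a
      have hpn : pnorm pp (fun a => x a + t * δ a) = (∑ a, (x a + t * δ a) ^ pp) ^ (1/pp) := by
        unfold pnorm
        congr 1
        exact Finset.sum_congr rfl fun a _ => by rw [abs_of_pos (hy a)]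
      have h := h_ineq (fun a => x a + t * δ a) hy
      rw [hpn] at h
      simp only [hF]
      linarith
    have hd1 : ∀ a : Fin (d i'), HasDerivAt (fun t : ℝ => x a + t * δ a) (δ a) 0 :=
      fun a => (hasDerivAt_mul_const (δ a)).const_add (x a)
    have hA : HasDerivAt (fun t => ∑ a, (x a + t * δ a) * c a) (∑ a, δ a * c a) 0 :=
      HasDerivAt.fun_sum fun a _ => (hd1 a).mul_const (c a)
    have hAval : (∑ a, δ a * c a) = c j0 := by
      simp only [hδ, ite_mul, one_mul, zero_mul]
      rw [Finset.sum_ite_eq' Finset.univ j0 c]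
      simp
    have hG : HasDerivAt (fun t => ∑ a, (x a + t * δ a) ^ pp)
        (∑ a, δ a * pp * (x a + 0 * δ a) ^ (pp - 1)) 0 :=
      HasDerivAt.fun_sum fun a _ => (hd1 a).rpow_const
        (Or.inl (by simpa using (hxpos a).ne'))
    have hGval : (∑ a, δ a * pp * (x a + 0 * δ a) ^ (pp - 1)) = pp * (x j0) ^ (pp - 1) := by
      simp only [zero_mul, add_zero]
      simp only [hδ, ite_mul, one_mul, zero_mul]
      rw [Finset.sum_ite_eq' Finset.univ j0 (fun a => pp * (x a) ^ (pp - 1))]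
      simp
    rw [hGval] at hG
    have hGat0 : (∑ a, (x a + 0 * δ a) ^ pp) = 1 := by
      simp only [zero_mul, add_zero]
      exact hsum1
    have hH : HasDerivAt (fun t => (∑ a, (x a + t * δ a) ^ pp) ^ (1/pp))
        ((pp * x j0 ^ (pp-1)) * (1/pp) * (∑ a, (x a + 0 * δ a) ^ pp) ^ (1/pp - 1)) 0 :=
      hG.rpow_const (Or.inl (by rw [hGat0]; exact one_ne_zero))
    rw [hGat0, Real.one_rpow, mul_one] at hH
    have hHval : (pp * x j0 ^ (pp-1)) * (1/pp) = x j0 ^ (pp-1) := by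
      field_simp
    rw [hHval] at hH
    have hFd : HasDerivAt F (c j0 - lam * (x j0 ^ (pp-1))) 0 := by
      rw [hF, ← hAval]
      exact hA.sub (hH.const_mul lam)
    have hzero := hlocmax.hasDerivAt_eq_zero hFd
    have : c j0 = lam * x j0 ^ (pp - 1) := by linarith
    exact this
  -- assembling
  have hQ : Qform f p xs = lam := by
    unfold Qform
    rw [Finset.prod_congr rfl fun l _ => hxs1 l, Finset.prod_const_one, div_one,
      ← hlam, abs_of_pos hlampos]
  have htn : tnorm f p = lam := by
    have hub : ∀ q ∈ {q : ℝ | ∃ x : ∀ i, Fin (d i) → ℝ,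
        (∀ i, x i ≠ 0) ∧ q = Qform f p x}, q ≤ lam := by
      rintro q ⟨x, hxne, rfl⟩
      have habs_ne : ∀ l, (fun j => |x l j|) ≠ 0 := by
        intro l hc
        apply hxne l
        funext j
        have := congrFun hc j
        simpa using this
      have hNpos : ∀ l, 0 < pnorm (p l) (x l) := fun l => pnorm_pos (hp0 l) (hxne l)
      have hpabs : ∀ l, pnorm (p l) (fun j => |x l j|) = pnorm (p l) (x l) := by
        intro l; simp [pnorm, abs_abs]
      have h1 : |form f x| ≤ lam * ∏ l, pnorm (p l) (x l) := by
        calc |form f x| ≤ form f (fun l j => |x l j|) := abs_form_le hf0 x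
          _ ≤ lam * ∏ l, pnorm (p l) (fun j => |x l j|) :=
              master _ (fun l j => abs_nonneg _) habs_ne
          _ = lam * ∏ l, pnorm (p l) (x l) := by
              rw [Finset.prod_congr rfl fun l _ => hpabs l]
      unfold Qform
      rw [div_le_iff₀ (Finset.prod_pos fun l _ => hNpos l)]
      linarith [h1]
    have hmem : lam ∈ {q : ℝ | ∃ x : ∀ i, Fin (d i) → ℝ,
        (∀ i, x i ≠ 0) ∧ q = Qform f p x} :=
      ⟨xs, fun l => ne_zero_of_pnorm_one (hp0 l) (hxs1 l), hQ.symm⟩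
    exact le_antisymm (Real.sSup_le hub hlampos.le) (le_csSup ⟨lam, hub⟩ hmem)
  refine ⟨lam, xs, hxspos, ⟨hxs1, ?_⟩, by rw [hQ, htn]⟩
  intro i' ji
  unfold sigma psi
  have hgrad_pos : 0 < grad f i' xs ji := by
    rw [hEL i' ji]
    exact mul_pos hlampos (Real.rpow_pos_of_pos (hxspos i' ji) _)
  have hsf : Real.sign (form f xs) = 1 := Real.sign_of_pos hlampos
  have hsg : Real.sign (grad f i' xs ji) = 1 := Real.sign_of_pos hgrad_pos
  rw [hsf, hsg, one_mul, mul_one, abs_of_pos hgrad_pos, hEL i' ji]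
  have he : (p i' - 1) * (conjExp (p i') - 1) = 1 := by
    unfold conjExp
    have h1 : p i' - 1 ≠ 0 := by have := hp i'; intro h; rw [sub_eq_zero] at h; linarith
    field_simp
    ring
  rw [Real.mul_rpow hlampos.le (Real.rpow_nonneg (hxspos i' ji).le _),
    ← Real.rpow_mul (hxspos i' ji).le, he, Real.rpow_one]

end TensorPF
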